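/- Let F′ ⊂ ℝ² be the convex hull of the four points (1,1), (0,1), (−2,−1), (1,−1), and let P = {(x,y,t) ∈ ℝ³ : (x,y) ∈ F′ and −1 ≤ t ≤ min{1, 1+y}}, with λ the three-dimensional Lebesgue measure. Then λ(P) = 20/3, ∫_P (max{0, −y} + t) dλ(x,y,t) = 7/8, and ∫_P t dλ(x,y,t) = −7/8. Consequently, (1/λ(P)) ∫_P (max{0,−y} + t) dλ = 21/160 > 0 and (1/λ(P)) ∫_P t dλ = −21/160 < 0. -/

import Mathlib

open MeasureTheory Set

/-- The polytope of the Hirzebruch surface `Σ₁`: the convex hull of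
`(1,1), (0,1), (-2,-1), (1,-1)`. -/
def F8 : Set (ℝ × ℝ) :=
  convexHull ℝ {(1, 1), (0, 1), (-2, -1), (1, -1)}

/-- The reflexive polytope of the smooth toric Fano 3-fold obtained by blowing up
`Σ₁ × ℙ¹` along `C × {p}`:
`P = {(x,y,t) : (x,y) ∈ F′, -1 ≤ t ≤ min {1, 1 + y}}`. -/
def P8 : Set (ℝ × ℝ × ℝ) :=
  {p | (p.1, p.2.1) ∈ F8 ∧ -1 ≤ p.2.2 ∧ p.2.2 ≤ min 1 (1 + p.2.1)}

lemma F8_eq : F8 = {p : ℝ × ℝ | -1 ≤ p.2 ∧ p.2 ≤ 1 ∧ p.2 - 1 ≤ p.1 ∧ p.1 ≤ 1} := by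
  apply Subset.antisymm
  · apply convexHull_min
    · intro p hp
      simp only [mem_insert_iff, mem_singleton_iff] at hp
      rcases hp with h | h | h | h <;> subst h <;> norm_num
    · rintro ⟨x1, y1⟩ ⟨h1, h2, h3, h4⟩ ⟨x2, y2⟩ ⟨h5, h6, h7, h8⟩ a b ha hb hab
      simp only [mem_setOf_eq, Prod.smul_mk, Prod.mk_add_mk, smul_eq_mul] at *
      refine ⟨by nlinarith, by nlinarith, by nlinarith, by nlinarith⟩
  · rintro ⟨x, y⟩ ⟨h1, h2, h3, h4⟩
    simp only [mem_setOf_eq] at *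
    have hv1 : ((1:ℝ), (1:ℝ)) ∈ F8 := subset_convexHull ℝ _ (by simp)
    have hv2 : ((0:ℝ), (1:ℝ)) ∈ F8 := subset_convexHull ℝ _ (by simp)
    have hv3 : ((-2:ℝ), (-1:ℝ)) ∈ F8 := subset_convexHull ℝ _ (by simp)
    have hv4 : ((1:ℝ), (-1:ℝ)) ∈ F8 := subset_convexHull ℝ _ (by simp)
    have hcvx : Convex ℝ F8 := convex_convexHull ℝ _
    set u : ℝ := (1 - y) / 2 with hu
    have hu0 : 0 ≤ u := by rw [hu]; linarith
    have hu1 : 0 ≤ 1 - u := by rw [hu]; linarith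
    have hA : ((y - 1, y) : ℝ × ℝ) ∈ F8 := by
      have := hcvx hv3 hv2 hu0 hu1 (by ring)
      have he : u • ((-2:ℝ), (-1:ℝ)) + (1 - u) • ((0:ℝ), (1:ℝ)) = ((y - 1, y) : ℝ × ℝ) := by
        rw [hu]; simp [Prod.smul_mk, Prod.ext_iff]; ring
      rwa [he] at this
    have hB : ((1, y) : ℝ × ℝ) ∈ F8 := by
      have := hcvx hv4 hv1 hu0 hu1 (by ring)
      have he : u • ((1:ℝ), (-1:ℝ)) + (1 - u) • ((1:ℝ), (1:ℝ)) = ((1, y) : ℝ × ℝ) := by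
        rw [hu]; simp [Prod.smul_mk, Prod.ext_iff]; ring
      rwa [he] at this
    have h2y : (0:ℝ) < 2 - y := by linarith
    set s : ℝ := (1 - x) / (2 - y) with hs
    have hs0 : 0 ≤ s := by rw [hs]; apply div_nonneg <;> linarith
    have hs1 : 0 ≤ 1 - s := by
      rw [hs]
      have : (1 - x) / (2 - y) ≤ 1 := by rw [div_le_one h2y]; linarith
      linarith
    have := hcvx hA hB hs0 hs1 (by ring)
    have he : s • ((y - 1, y) : ℝ × ℝ) + (1 - s) • ((1, y) : ℝ × ℝ) = ((x, y) : ℝ × ℝ) := by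
      rw [hs]; simp [Prod.smul_mk, Prod.ext_iff]
      constructor
      · field_simp
        ring
      · ring
    rwa [he] at this



/-- middle sets -/
def F2 : Set (ℝ × ℝ) := {v | -1 ≤ v.2 ∧ v.2 ≤ 1 ∧ v.2 - 1 ≤ v.1 ∧ v.1 ≤ 1}
def Q8 : Set ((ℝ × ℝ) × ℝ) := {q | q.1 ∈ F2 ∧ q.2 ∈ Icc (-1) (min 1 (1 + q.1.2))}
def F3 : Set (ℝ × ℝ) := {w | w.1 ∈ Icc (-1 : ℝ) 1 ∧ w.2 ∈ Icc (w.1 - 1) 1}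

lemma isCompact_Q8 : IsCompact Q8 := by
  have hclosed : IsClosed Q8 := by
    have : Q8 = {q : (ℝ × ℝ) × ℝ | -1 ≤ q.1.2} ∩ {q | q.1.2 ≤ 1} ∩ {q | q.1.2 - 1 ≤ q.1.1} ∩
        {q | q.1.1 ≤ 1} ∩ {q | -1 ≤ q.2} ∩ {q | q.2 ≤ min 1 (1 + q.1.2)} := by
      ext ⟨⟨x, y⟩, t⟩
      simp [Q8, F2, mem_Icc]
      tauto
    rw [this]
    repeat' apply IsClosed.inter
    all_goals exact isClosed_le (by fun_prop) (by fun_prop)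
  refine IsCompact.of_isClosed_subset (s := (Icc (-2:ℝ) 1 ×ˢ Icc (-1:ℝ) 1) ×ˢ Icc (-1:ℝ) 1)
    ((isCompact_Icc.prod isCompact_Icc).prod isCompact_Icc) hclosed ?_
  rintro ⟨⟨x, y⟩, t⟩ ⟨⟨h1, h2, h3, h4⟩, h5, h6⟩
  refine ⟨⟨⟨by linarith, h4⟩, ⟨h1, h2⟩⟩, ⟨h5, le_trans h6 (min_le_left _ _)⟩⟩
  -- box : (Icc (-2) 1 ×ˢ Icc (-1) 1) ×ˢ Icc (-1) 1

lemma isCompact_F3 : IsCompact F3 := by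
  have hclosed : IsClosed F3 := by
    have : F3 = {w : ℝ × ℝ | -1 ≤ w.1} ∩ {w | w.1 ≤ 1} ∩ {w | w.1 - 1 ≤ w.2} ∩ {w | w.2 ≤ 1} := by
      ext ⟨y, x⟩; simp [F3, mem_Icc]; tauto
    rw [this]
    repeat' apply IsClosed.inter
    all_goals exact isClosed_le (by fun_prop) (by fun_prop)
  refine IsCompact.of_isClosed_subset (s := Icc (-1:ℝ) 1 ×ˢ Icc (-2:ℝ) 1)
    (isCompact_Icc.prod isCompact_Icc) hclosed ?_
  rintro ⟨y, x⟩ ⟨⟨h1, h2⟩, h3, h4⟩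
  exact ⟨⟨h1, h2⟩, ⟨by linarith, h4⟩⟩
  -- box : Icc (-1) 1 ×ˢ Icc (-2) 1

lemma master (f : ℝ → ℝ → ℝ) (hf : Continuous (Function.uncurry f)) :
    (∫ p in P8, f p.2.1 p.2.2) =
      ∫ y in (-1 : ℝ)..1, (2 - y) * ∫ t in (-1 : ℝ)..(min 1 (1 + y)), f y t := by
  have hK : Continuous fun y : ℝ => ∫ t in (-1 : ℝ)..(min 1 (1 + y)), f y t :=
    intervalIntegral.continuous_parametric_intervalIntegral_of_continuous hf (by fun_prop)
  have hQm : MeasurableSet Q8 := isCompact_Q8.isClosed.measurableSet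
  have hF2m : MeasurableSet F2 := by
    have : F2 = Prod.swap ⁻¹' F3 := by
      ext ⟨x, y⟩; simp [F2, F3, mem_Icc]; tauto
    rw [this]
    exact isCompact_F3.isClosed.measurableSet.preimage measurable_swap
  have hF3m : MeasurableSet F3 := isCompact_F3.isClosed.measurableSet
  -- Step 1 : unassociate
  have step1 : (∫ p in P8, f p.2.1 p.2.2) = ∫ q in Q8, f q.1.2 q.2 := by
    rw [← (volume_preserving_prodAssoc.setIntegral_preimage_emb
      MeasurableEquiv.prodAssoc.measurableEmbedding (fun p : ℝ × ℝ × ℝ => f p.2.1 p.2.2) P8)]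
    have hset : (MeasurableEquiv.prodAssoc : (ℝ × ℝ) × ℝ ≃ᵐ ℝ × ℝ × ℝ) ⁻¹' P8 = Q8 := by
      ext ⟨⟨x, y⟩, t⟩
      simp only [mem_preimage, MeasurableEquiv.prodAssoc, MeasurableEquiv.coe_mk,
        Equiv.prodAssoc_apply, P8, F8_eq, Q8, F2, mem_setOf_eq, mem_Icc]
    rw [hset]
    rfl
  -- Step 2 : Fubini in t
  have hgc : Continuous fun q : (ℝ × ℝ) × ℝ => f q.1.2 q.2 :=
    hf.comp ((continuous_fst.snd).prodMk continuous_snd)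
  have hIntQ : IntegrableOn (fun q : (ℝ × ℝ) × ℝ => f q.1.2 q.2) Q8 :=
    ContinuousOn.integrableOn_compact isCompact_Q8 hgc.continuousOn
  have step2 : (∫ q in Q8, f q.1.2 q.2) =
      ∫ v in F2, ∫ t in (-1 : ℝ)..(min 1 (1 + v.2)), f v.2 t := by
    rw [← integral_indicator hQm, Measure.volume_eq_prod, integral_prod _
      (by rw [← Measure.volume_eq_prod]; exact (integrable_indicator_iff hQm).2 hIntQ)]
    have hpt : ∀ v : ℝ × ℝ, (∫ t, Q8.indicator (fun q : (ℝ × ℝ) × ℝ => f q.1.2 q.2) (v, t)) =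
        F2.indicator (fun v : ℝ × ℝ => ∫ t in (-1 : ℝ)..(min 1 (1 + v.2)), f v.2 t) v := by
      intro v
      by_cases hv : v ∈ F2
      · have hle : (-1 : ℝ) ≤ min 1 (1 + v.2) := by
          rcases hv with ⟨h1, -⟩
          exact le_min (by norm_num) (by linarith)
        have hfun : (fun t => Q8.indicator (fun q : (ℝ × ℝ) × ℝ => f q.1.2 q.2) (v, t)) =
            (Icc (-1 : ℝ) (min 1 (1 + v.2))).indicator (fun t => f v.2 t) := by
          funext t
          by_cases ht : t ∈ Icc (-1 : ℝ) (min 1 (1 + v.2))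
          · rw [Set.indicator_of_mem (show (v, t) ∈ Q8 from ⟨hv, ht⟩), Set.indicator_of_mem ht]
          · rw [Set.indicator_of_notMem (show (v, t) ∉ Q8 from fun hq => ht hq.2),
              Set.indicator_of_notMem ht]
        rw [hfun, integral_indicator measurableSet_Icc, Set.indicator_of_mem hv,
          integral_Icc_eq_integral_Ioc, ← intervalIntegral.integral_of_le hle]
      · have hfun : (fun t => Q8.indicator (fun q : (ℝ × ℝ) × ℝ => f q.1.2 q.2) (v, t)) =
            fun _ => (0 : ℝ) := by
          funext t
          exact Set.indicator_of_notMem (fun hq => hv hq.1) _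
        rw [hfun, integral_zero, Set.indicator_of_notMem hv]
    rw [integral_congr_ae (Filter.Eventually.of_forall hpt), integral_indicator hF2m]
  -- Step 3 : swap the two base coordinates
  set K : ℝ → ℝ := fun y => ∫ t in (-1 : ℝ)..(min 1 (1 + y)), f y t with hKdef
  have hswapMP : MeasurePreserving (Prod.swap : ℝ × ℝ → ℝ × ℝ) volume volume := by
    rw [Measure.volume_eq_prod]
    exact Measure.measurePreserving_swap
  have step3 : (∫ v in F2, K v.2) = ∫ w in F3, K w.1 := by
    rw [← hswapMP.setIntegral_preimage_emb MeasurableEquiv.prodComm.measurableEmbedding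
      (fun v : ℝ × ℝ => K v.2) F2]
    have hset : (Prod.swap : ℝ × ℝ → ℝ × ℝ) ⁻¹' F2 = F3 := by
      ext ⟨y, x⟩
      simp [F2, F3, mem_Icc]
      tauto
    rw [hset]
    rfl
  -- Step 4 : Fubini in x
  have hIntF3 : IntegrableOn (fun w : ℝ × ℝ => K w.1) F3 :=
    ContinuousOn.integrableOn_compact isCompact_F3 (hK.comp continuous_fst).continuousOn
  have step4 : (∫ w in F3, K w.1) = ∫ y in Icc (-1 : ℝ) 1, (2 - y) * K y := by
    rw [← integral_indicator hF3m, Measure.volume_eq_prod, integral_prod _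
      (by rw [← Measure.volume_eq_prod]; exact (integrable_indicator_iff hF3m).2 hIntF3)]
    have hpt : ∀ y : ℝ, (∫ x, F3.indicator (fun w : ℝ × ℝ => K w.1) (y, x)) =
        (Icc (-1 : ℝ) 1).indicator (fun y => (2 - y) * K y) y := by
      intro y
      by_cases hy : y ∈ Icc (-1 : ℝ) 1
      · have hfun : (fun x => F3.indicator (fun w : ℝ × ℝ => K w.1) (y, x)) =
            (Icc (y - 1) 1).indicator (fun _ => K y) := by
          funext x
          by_cases hx : x ∈ Icc (y - 1) 1
          · rw [Set.indicator_of_mem (show (y, x) ∈ F3 from ⟨hy, hx⟩), Set.indicator_of_mem hx]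
          · rw [Set.indicator_of_notMem (show (y, x) ∉ F3 from fun hq => hx hq.2),
              Set.indicator_of_notMem hx]
        rw [hfun, integral_indicator measurableSet_Icc, setIntegral_const,
          Set.indicator_of_mem hy, Real.volume_real_Icc_of_le (by linarith [hy.2]), smul_eq_mul]
        ring_nf
      · have hfun : (fun x => F3.indicator (fun w : ℝ × ℝ => K w.1) (y, x)) =
            fun _ => (0 : ℝ) := by
          funext x
          exact Set.indicator_of_notMem (fun hq => hy hq.1) _
        rw [hfun, integral_zero, Set.indicator_of_notMem hy]
    rw [integral_congr_ae (Filter.Eventually.of_forall hpt), integral_indicator measurableSet_Icc]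
  rw [step1, step2, step3, step4, integral_Icc_eq_integral_Ioc,
    ← intervalIntegral.integral_of_le (by norm_num : (-1 : ℝ) ≤ 1)]


open intervalIntegral in
section


lemma integral_cubic (a b c0 c1 c2 c3 : ℝ) :
    ∫ y in a..b, (c0 + c1 * y + c2 * y ^ 2 + c3 * y ^ 3) =
      (c0 * b + c1 * b ^ 2 / 2 + c2 * b ^ 3 / 3 + c3 * b ^ 4 / 4) -
      (c0 * a + c1 * a ^ 2 / 2 + c2 * a ^ 3 / 3 + c3 * a ^ 4 / 4) := by
  have h : ∀ y : ℝ, HasDerivAt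
      (fun y : ℝ => c0 * y + c1 * y ^ 2 / 2 + c2 * y ^ 3 / 3 + c3 * y ^ 4 / 4)
      (c0 + c1 * y + c2 * y ^ 2 + c3 * y ^ 3) y := by
    intro y
    have h1 := ((((hasDerivAt_id y).const_mul c0).add
      (((hasDerivAt_pow 2 y).const_mul c1).div_const 2)).add
      (((hasDerivAt_pow 3 y).const_mul c2).div_const 3)).add
      (((hasDerivAt_pow 4 y).const_mul c3).div_const 4)
    refine (h1.congr_deriv (by push_cast; ring)).congr_of_eventuallyEq
      (Filter.Eventually.of_forall fun x => ?_)
    simp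
  rw [intervalIntegral.integral_eq_sub_of_hasDerivAt (fun y _ => h y)
    ((Continuous.intervalIntegrable (by fun_prop) a b))]

lemma split_eval (f : ℝ → ℝ → ℝ) (hf : Continuous (Function.uncurry f)) :
    (∫ y in (-1 : ℝ)..1, (2 - y) * ∫ t in (-1 : ℝ)..(min 1 (1 + y)), f y t) =
      (∫ y in (-1 : ℝ)..0, (2 - y) * ∫ t in (-1 : ℝ)..(1 + y), f y t) +
      ∫ y in (0 : ℝ)..1, (2 - y) * ∫ t in (-1 : ℝ)..1, f y t := by
  have hK : Continuous fun y : ℝ => (2 - y) * ∫ t in (-1 : ℝ)..(min 1 (1 + y)), f y t := by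
    exact (by fun_prop : Continuous fun y : ℝ => (2 - y)).mul
      (intervalIntegral.continuous_parametric_intervalIntegral_of_continuous hf (by fun_prop))
  rw [← intervalIntegral.integral_add_adjacent_intervals (a := (-1 : ℝ)) (b := 0) (c := 1)
    (hK.intervalIntegrable _ _) (hK.intervalIntegrable _ _)]
  congr 1
  · apply intervalIntegral.integral_congr
    intro y hy
    dsimp only
    rw [Set.uIcc_of_le (by norm_num : (-1 : ℝ) ≤ 0)] at hy
    rw [min_eq_right (by linarith [hy.2] : (1 : ℝ) + y ≤ 1)]
  · apply intervalIntegral.integral_congr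
    intro y hy
    dsimp only
    rw [Set.uIcc_of_le (by norm_num : (0 : ℝ) ≤ 1)] at hy
    rw [min_eq_left (by linarith [hy.1] : (1 : ℝ) ≤ 1 + y)]

lemma eval1 : (∫ y in (-1 : ℝ)..1, (2 - y) * ∫ t in (-1 : ℝ)..(min 1 (1 + y)), (1 : ℝ)) =
    20 / 3 := by
  rw [split_eval (fun _ _ => (1 : ℝ)) (by fun_prop)]
  have h1 : (∫ y in (-1 : ℝ)..0, (2 - y) * ∫ t in (-1 : ℝ)..(1 + y), (1 : ℝ)) =
      ∫ y in (-1 : ℝ)..0, (4 + 0 * y + (-1) * y ^ 2 + 0 * y ^ 3) := by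
    apply intervalIntegral.integral_congr
    intro y _
    dsimp only
    rw [intervalIntegral.integral_const, smul_eq_mul, mul_one]
    ring
  have h2 : (∫ y in (0 : ℝ)..1, (2 - y) * ∫ t in (-1 : ℝ)..1, (1 : ℝ)) =
      ∫ y in (0 : ℝ)..1, (4 + (-2) * y + 0 * y ^ 2 + 0 * y ^ 3) := by
    apply intervalIntegral.integral_congr
    intro y _
    dsimp only
    rw [intervalIntegral.integral_const, smul_eq_mul, mul_one]
    ring
  rw [h1, h2, integral_cubic, integral_cubic]
  norm_num

lemma eval2 : (∫ y in (-1 : ℝ)..1, (2 - y) * ∫ t in (-1 : ℝ)..(min 1 (1 + y)), t) =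
    -(7 / 8) := by
  rw [split_eval (fun _ t => t) (by fun_prop)]
  have h1 : (∫ y in (-1 : ℝ)..0, (2 - y) * ∫ t in (-1 : ℝ)..(1 + y), t) =
      ∫ y in (-1 : ℝ)..0, (0 + 2 * y + 0 * y ^ 2 + (-(1 / 2)) * y ^ 3) := by
    apply intervalIntegral.integral_congr
    intro y _
    dsimp only
    rw [integral_id]
    ring
  have h2 : (∫ y in (0 : ℝ)..1, (2 - y) * ∫ t in (-1 : ℝ)..1, t) =
      ∫ y in (0 : ℝ)..1, (0 + 0 * y + 0 * y ^ 2 + 0 * y ^ 3) := by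
    apply intervalIntegral.integral_congr
    intro y _
    dsimp only
    rw [integral_id]
    ring
  rw [h1, h2, integral_cubic, integral_cubic]
  norm_num

lemma eval3 : (∫ y in (-1 : ℝ)..1,
      (2 - y) * ∫ t in (-1 : ℝ)..(min 1 (1 + y)), (max 0 (-y) + t)) = 7 / 8 := by
  rw [split_eval (fun y t => max 0 (-y) + t) (by fun_prop)]
  have h1 : (∫ y in (-1 : ℝ)..0, (2 - y) * ∫ t in (-1 : ℝ)..(1 + y), (max 0 (-y) + t)) =
      ∫ y in (-1 : ℝ)..0, (0 + (-2) * y + 0 * y ^ 2 + (1 / 2) * y ^ 3) := by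
    apply intervalIntegral.integral_congr
    intro y hy
    dsimp only
    rw [Set.uIcc_of_le (by norm_num : (-1 : ℝ) ≤ 0)] at hy
    rw [intervalIntegral.integral_add (intervalIntegrable_const)
      (((by fun_prop : Continuous fun t : ℝ => t).intervalIntegrable _ _)), integral_id,
      intervalIntegral.integral_const, max_eq_right (by linarith [hy.2] : (0:ℝ) ≤ -y),
      smul_eq_mul]
    ring
  have h2 : (∫ y in (0 : ℝ)..1, (2 - y) * ∫ t in (-1 : ℝ)..1, (max 0 (-y) + t)) =
      ∫ y in (0 : ℝ)..1, (0 + 0 * y + 0 * y ^ 2 + 0 * y ^ 3) := by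
    apply intervalIntegral.integral_congr
    intro y hy
    dsimp only
    rw [Set.uIcc_of_le (by norm_num : (0 : ℝ) ≤ 1)] at hy
    rw [intervalIntegral.integral_add (intervalIntegrable_const)
      (((by fun_prop : Continuous fun t : ℝ => t).intervalIntegrable _ _)), integral_id,
      intervalIntegral.integral_const, max_eq_left (by linarith [hy.1] : -y ≤ (0:ℝ)),
      smul_eq_mul]
    ring
  rw [h1, h2, integral_cubic, integral_cubic]
  norm_num


lemma isCompact_P8 : IsCompact P8 := by
  have hclosed : IsClosed P8 := by
    have : P8 = {p : ℝ × ℝ × ℝ | -1 ≤ p.2.1} ∩ {p | p.2.1 ≤ 1} ∩ {p | p.2.1 - 1 ≤ p.1} ∩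
        {p | p.1 ≤ 1} ∩ {p | -1 ≤ p.2.2} ∩ {p | p.2.2 ≤ min 1 (1 + p.2.1)} := by
      ext ⟨x, y, t⟩
      simp only [P8, F8_eq, mem_setOf_eq, mem_inter_iff]
      tauto
    rw [this]
    repeat' apply IsClosed.inter
    all_goals exact isClosed_le (by fun_prop) (by fun_prop)
  refine IsCompact.of_isClosed_subset (s := Icc (-2:ℝ) 1 ×ˢ (Icc (-1:ℝ) 1 ×ˢ Icc (-1:ℝ) 1))
    (isCompact_Icc.prod (isCompact_Icc.prod isCompact_Icc)) hclosed ?_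
  rintro ⟨x, y, t⟩ ⟨hF, h5, h6⟩
  rw [F8_eq] at hF
  obtain ⟨h1, h2, h3, h4⟩ := hF
  exact ⟨⟨by simp at h1 h2 h3 h4 ⊢; linarith, by simpa using h4⟩,
    ⟨by simpa using h1, by simpa using h2⟩,
    ⟨h5, le_trans h6 (min_le_left _ _)⟩⟩

end

/-- `λ(P) = 20/3`, `∫_P (max{0,-y} + t) = 7/8`, `∫_P t = -7/8`, so the average of
`max{0,-y} + t` over `P` is `21/160 > 0` and the average of `t` is `-21/160 < 0`. -/
theorem smooth_toric_Fano_threefold_invariants :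
    volume P8 = 20 / 3 ∧
    (∫ p in P8, (max 0 (-p.2.1) + p.2.2)) = 7 / 8 ∧
    (∫ p in P8, p.2.2) = -(7 / 8) ∧
    (1 / (volume P8).toReal) * (∫ p in P8, (max 0 (-p.2.1) + p.2.2)) = 21 / 160 ∧
    (0 : ℝ) < 21 / 160 ∧
    (1 / (volume P8).toReal) * (∫ p in P8, p.2.2) = -(21 / 160) ∧
    (-(21 / 160) : ℝ) < 0 := by
  have h1 : (∫ p in P8, (1 : ℝ)) = 20 / 3 := by
    rw [master (fun _ _ => (1 : ℝ)) (by fun_prop)]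
    exact eval1
  have h2 : (∫ p in P8, (max 0 (-p.2.1) + p.2.2)) = 7 / 8 := by
    rw [master (fun y t => max 0 (-y) + t) (by fun_prop)]
    exact eval3
  have h3 : (∫ p in P8, p.2.2) = -(7 / 8) := by
    rw [master (fun _ t => t) (by fun_prop)]
    exact eval2
  have hfin : volume P8 ≠ ⊤ := isCompact_P8.measure_lt_top.ne
  have hto : (volume P8).toReal = 20 / 3 := by
    rw [setIntegral_const, smul_eq_mul, mul_one] at h1
    exact h1
  have hvol : volume P8 = 20 / 3 := by
    have h := ENNReal.ofReal_toReal hfin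
    rw [hto] at h
    rw [← h]
    rw [ENNReal.ofReal_div_of_pos (by norm_num)]
    norm_num
  have htoReal : (volume P8).toReal = 20 / 3 := hto
  refine ⟨hvol, h2, h3, ?_, by norm_num, ?_, by norm_num⟩
  · rw [htoReal, h2]; norm_num
  · rw [htoReal, h3]; norm_num
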